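/- If C is a finitely complete category which satisfies the triangular lemma, then for every object X of C, both the slice category Over X (= C ↓ X) and the coslice category Under X (= X ↓ C) satisfy the triangular lemma. -/

import Mathlib

open CategoryTheory CategoryTheory.Limits

universe v u v₂ u₂

variable {C : Type u} [Category.{v} C]

/-- For an internal relation represented by `r : R₀ ⟶ X ⨯ X` and morphisms
`x, y : S ⟶ X`, `x R y` means `⟨x, y⟩` factors through `r`. -/
def CategoryTheory.RelFactors [HasBinaryProducts C] {R₀ X : C} (r : R₀ ⟶ X ⨯ X)
    {S : C} (x y : S ⟶ X) : Prop :=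
  ∃ u : S ⟶ R₀, u ≫ r = prod.lift x y

/-- `r : R₀ ⟶ X ⨯ X` represents an internal equivalence relation on `X`:
it is a monomorphism and the induced relation on generalized elements is reflexive,
symmetric and transitive. -/
structure CategoryTheory.IsInternalEquivalence [HasBinaryProducts C] {R₀ X : C}
    (r : R₀ ⟶ X ⨯ X) : Prop where
  mono : Mono r
  refl : ∀ ⦃S : C⦄ (x : S ⟶ X), RelFactors r x x
  symm : ∀ ⦃S : C⦄ (x y : S ⟶ X), RelFactors r x y → RelFactors r y x
  trans : ∀ ⦃S : C⦄ (x y z : S ⟶ X),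
    RelFactors r x y → RelFactors r y z → RelFactors r x z

/-- A category with binary products satisfies the *triangular lemma* if for all internal
equivalence relations `R, S, T` on an object `X` with `R ∩ S ≤ T`, whenever
`x R y`, `y S z` and `x T z`, then `y T z`. -/
def CategoryTheory.SatisfiesTriangularLemma (C : Type u) [Category.{v} C]
    [HasBinaryProducts C] : Prop :=
  ∀ ⦃X R₀ S₀ T₀ : C⦄ (r : R₀ ⟶ X ⨯ X) (s : S₀ ⟶ X ⨯ X) (t : T₀ ⟶ X ⨯ X),
    IsInternalEquivalence r → IsInternalEquivalence s → IsInternalEquivalence t →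
    (∀ ⦃W : C⦄ (x y : W ⟶ X), RelFactors r x y → RelFactors s x y → RelFactors t x y) →
    ∀ ⦃W : C⦄ (x y z : W ⟶ X),
      RelFactors r x y → RelFactors s y z → RelFactors t x z → RelFactors t y z

section Aux

variable [HasFiniteLimits C] {X : C}

/-! ### The slice case -/

/-- The underlying relation in `C` of an internal relation in `Over X`. -/
noncomputable def relOver {A R₀ : Over X} (r : R₀ ⟶ A ⨯ A) : R₀.left ⟶ A.left ⨯ A.left :=
  r.left ≫ prod.lift (prod.fst : A ⨯ A ⟶ A).left (prod.snd : A ⨯ A ⟶ A).left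

lemma relOver_fst {A R₀ : Over X} (r : R₀ ⟶ A ⨯ A) :
    relOver r ≫ prod.fst = r.left ≫ (prod.fst : A ⨯ A ⟶ A).left := by
  simp only [relOver, Category.assoc]
  rw [prod.lift_fst]

lemma relOver_snd {A R₀ : Over X} (r : R₀ ⟶ A ⨯ A) :
    relOver r ≫ prod.snd = r.left ≫ (prod.snd : A ⨯ A ⟶ A).left := by
  simp only [relOver, Category.assoc]
  rw [prod.lift_snd]

lemma relOver_fst_w {A R₀ : Over X} (r : R₀ ⟶ A ⨯ A) :
    relOver r ≫ prod.fst ≫ A.hom = R₀.hom := by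
  rw [← Category.assoc, relOver_fst, Category.assoc, Over.w (prod.fst : A ⨯ A ⟶ A), Over.w r]

lemma relOver_snd_w {A R₀ : Over X} (r : R₀ ⟶ A ⨯ A) :
    relOver r ≫ prod.snd ≫ A.hom = R₀.hom := by
  rw [← Category.assoc, relOver_snd, Category.assoc, Over.w (prod.snd : A ⨯ A ⟶ A), Over.w r]

lemma left_comp_relOver {A R₀ Q : Over X} (r : R₀ ⟶ A ⨯ A) (g : Q ⟶ R₀) :
    g.left ≫ relOver r =
      prod.lift ((g ≫ r) ≫ prod.fst).left ((g ≫ r) ≫ prod.snd).left := by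
  apply Limits.prod.hom_ext
  · rw [Category.assoc, relOver_fst, prod.lift_fst, Over.comp_left, Over.comp_left,
      Category.assoc]
  · rw [Category.assoc, relOver_snd, prod.lift_snd, Over.comp_left, Over.comp_left,
      Category.assoc]

lemma relOverA {A R₀ : Over X} (r : R₀ ⟶ A ⨯ A) {S : Over X} {x y : S ⟶ A}
    (h : RelFactors r x y) : RelFactors (relOver r) x.left y.left := by
  obtain ⟨u, hu⟩ := h
  refine ⟨u.left, ?_⟩
  rw [left_comp_relOver r u, hu]
  rw [prod.lift_fst, prod.lift_snd]

lemma relOver_w {A R₀ : Over X} (r : R₀ ⟶ A ⨯ A) {W : C} {x y : W ⟶ A.left}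
    (h : RelFactors (relOver r) x y) : x ≫ A.hom = y ≫ A.hom := by
  obtain ⟨u, hu⟩ := h
  have hx : x = u ≫ relOver r ≫ prod.fst := by rw [reassoc_of% hu, prod.lift_fst]
  have hy : y = u ≫ relOver r ≫ prod.snd := by rw [reassoc_of% hu, prod.lift_snd]
  rw [hx, hy]
  simp only [Category.assoc]
  rw [relOver_fst_w, relOver_snd_w]

lemma relOverB {A R₀ : Over X} (r : R₀ ⟶ A ⨯ A) {S : Over X} (x y : S ⟶ A)
    (h : RelFactors (relOver r) x.left y.left) : RelFactors r x y := by
  obtain ⟨u, hu⟩ := h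
  have hx : u ≫ relOver r ≫ prod.fst = x.left := by rw [reassoc_of% hu, prod.lift_fst]
  have hy : u ≫ relOver r ≫ prod.snd = y.left := by rw [reassoc_of% hu, prod.lift_snd]
  have hw : u ≫ R₀.hom = S.hom := by
    rw [← relOver_fst_w r, reassoc_of% hu, prod.lift_fst_assoc, Over.w x]
  refine ⟨Over.homMk u hw, ?_⟩
  apply Limits.prod.hom_ext
  · apply Over.OverMorphism.ext
    rw [prod.lift_fst]
    show (u ≫ r.left) ≫ (prod.fst : A ⨯ A ⟶ A).left = x.left
    rw [Category.assoc, ← relOver_fst]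
    exact hx
  · apply Over.OverMorphism.ext
    rw [prod.lift_snd]
    show (u ≫ r.left) ≫ (prod.snd : A ⨯ A ⟶ A).left = y.left
    rw [Category.assoc, ← relOver_snd]
    exact hy

lemma relOver_equiv {A R₀ : Over X} (r : R₀ ⟶ A ⨯ A) (hR : IsInternalEquivalence r) :
    IsInternalEquivalence (relOver r) := by
  have := hR.mono
  constructor
  · -- mono
    constructor
    intro Z f g h
    have h1 : f ≫ r.left ≫ (prod.fst : A ⨯ A ⟶ A).left =
        g ≫ r.left ≫ (prod.fst : A ⨯ A ⟶ A).left := by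
      have := congrArg (fun k => k ≫ (prod.fst : A.left ⨯ A.left ⟶ A.left)) h
      simpa only [Category.assoc, relOver_fst] using this
    have h2 : f ≫ r.left ≫ (prod.snd : A ⨯ A ⟶ A).left =
        g ≫ r.left ≫ (prod.snd : A ⨯ A ⟶ A).left := by
      have := congrArg (fun k => k ≫ (prod.snd : A.left ⨯ A.left ⟶ A.left)) h
      simpa only [Category.assoc, relOver_snd] using this
    have h1' := reassoc_of% h1
    have hfg : f ≫ R₀.hom = g ≫ R₀.hom := by
      calc f ≫ R₀.hom = f ≫ r.left ≫ (prod.fst : A ⨯ A ⟶ A).left ≫ A.hom := by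
            rw [Over.w (prod.fst : A ⨯ A ⟶ A), Over.w r]
        _ = g ≫ r.left ≫ (prod.fst : A ⨯ A ⟶ A).left ≫ A.hom := by
            simpa only [Category.assoc] using h1' A.hom
        _ = g ≫ R₀.hom := by rw [Over.w (prod.fst : A ⨯ A ⟶ A), Over.w r]
    let f' : Over.mk (f ≫ R₀.hom) ⟶ R₀ := Over.homMk f rfl
    let g' : Over.mk (f ≫ R₀.hom) ⟶ R₀ := Over.homMk g hfg.symm
    have hfg' : f' ≫ r = g' ≫ r := by
      apply Limits.prod.hom_ext
      · apply Over.OverMorphism.ext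
        simpa [f', g', Over.comp_left] using h1
      · apply Over.OverMorphism.ext
        simpa [f', g', Over.comp_left] using h2
    have : f' = g' := (cancel_mono r).mp hfg'
    exact congrArg CommaMorphism.left this
  · -- refl
    intro W x
    exact relOverA r (hR.refl (Over.homMk x rfl : Over.mk (x ≫ A.hom) ⟶ A))
  · -- symm
    intro W x y h
    have e := relOver_w r h
    exact relOverA r (hR.symm _ _
      (relOverB r (Over.homMk x rfl : Over.mk (x ≫ A.hom) ⟶ A) (Over.homMk y e.symm) h))
  · -- trans
    intro W x y z h h'
    have e := relOver_w r h
    have e' := relOver_w r h'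
    exact relOverA r (hR.trans (Over.homMk x rfl : Over.mk (x ≫ A.hom) ⟶ A)
      (Over.homMk y e.symm) (Over.homMk z (e'.symm.trans e.symm))
      (relOverB r _ _ h) (relOverB r _ _ h'))

/-! ### The coslice case -/

/-- The underlying relation in `C` of an internal relation in `Under X`. -/
noncomputable def relUnder {A R₀ : Under X} (r : R₀ ⟶ A ⨯ A) :
    R₀.right ⟶ A.right ⨯ A.right :=
  r.right ≫ prod.lift (prod.fst : A ⨯ A ⟶ A).right (prod.snd : A ⨯ A ⟶ A).right

lemma underComparison_eq {A : Under X} :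
    prod.lift (prod.fst : A ⨯ A ⟶ A).right (prod.snd : A ⨯ A ⟶ A).right =
      prodComparison (Under.forget X) A A := rfl

lemma underComparison_mono {A : Under X} :
    Mono (prod.lift (prod.fst : A ⨯ A ⟶ A).right (prod.snd : A ⨯ A ⟶ A).right) := by
  rw [underComparison_eq]
  exact (inferInstance : Mono (prodComparison (Under.forget X) A A))

lemma relUnder_fst {A R₀ : Under X} (r : R₀ ⟶ A ⨯ A) :
    relUnder r ≫ prod.fst = r.right ≫ (prod.fst : A ⨯ A ⟶ A).right := by
  simp only [relUnder, Category.assoc]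
  rw [prod.lift_fst]

lemma relUnder_snd {A R₀ : Under X} (r : R₀ ⟶ A ⨯ A) :
    relUnder r ≫ prod.snd = r.right ≫ (prod.snd : A ⨯ A ⟶ A).right := by
  simp only [relUnder, Category.assoc]
  rw [prod.lift_snd]

lemma right_comp_relUnder {A R₀ Q : Under X} (r : R₀ ⟶ A ⨯ A) (g : Q ⟶ R₀) :
    g.right ≫ relUnder r =
      prod.lift ((g ≫ r) ≫ prod.fst).right ((g ≫ r) ≫ prod.snd).right := by
  apply Limits.prod.hom_ext
  · rw [Category.assoc, relUnder_fst, prod.lift_fst, Under.comp_right, Under.comp_right,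
      Category.assoc]
  · rw [Category.assoc, relUnder_snd, prod.lift_snd, Under.comp_right, Under.comp_right,
      Category.assoc]

lemma relUnderA {A R₀ : Under X} (r : R₀ ⟶ A ⨯ A) {S : Under X} {x y : S ⟶ A}
    (h : RelFactors r x y) : RelFactors (relUnder r) x.right y.right := by
  obtain ⟨u, hu⟩ := h
  refine ⟨u.right, ?_⟩
  rw [right_comp_relUnder r u, hu]
  rw [prod.lift_fst, prod.lift_snd]

lemma relUnder_mono {A R₀ : Under X} (r : R₀ ⟶ A ⨯ A) (hR : Mono r) :
    Mono (relUnder r) := by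
  have h1 : Mono r.right := Under.mono_right_of_mono r
  have h2 := underComparison_mono (A := A)
  exact mono_comp _ _

lemma relUnderB {A R₀ : Under X} (r : R₀ ⟶ A ⨯ A) (hm : Mono r) {S : Under X} (x y : S ⟶ A)
    (h : RelFactors (relUnder r) x.right y.right) : RelFactors r x y := by
  have := relUnder_mono r hm
  obtain ⟨u, hu⟩ := h
  have hx : u ≫ relUnder r ≫ prod.fst = x.right := by rw [reassoc_of% hu, prod.lift_fst]
  have hy : u ≫ relUnder r ≫ prod.snd = y.right := by rw [reassoc_of% hu, prod.lift_snd]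
  have hw : S.hom ≫ u = R₀.hom := by
    apply (cancel_mono (relUnder r)).mp
    apply Limits.prod.hom_ext
    · trans A.hom
      · simp only [Category.assoc]
        rw [reassoc_of% hu, prod.lift_fst, Under.w x]
      · rw [Category.assoc, relUnder_fst, ← Category.assoc, Under.w r,
          Under.w (prod.fst : A ⨯ A ⟶ A)]
    · trans A.hom
      · simp only [Category.assoc]
        rw [reassoc_of% hu, prod.lift_snd, Under.w y]
      · rw [Category.assoc, relUnder_snd, ← Category.assoc, Under.w r,
          Under.w (prod.snd : A ⨯ A ⟶ A)]
  refine ⟨Under.homMk u hw, ?_⟩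
  apply Limits.prod.hom_ext
  · apply Under.UnderMorphism.ext
    rw [prod.lift_fst]
    show (u ≫ r.right) ≫ (prod.fst : A ⨯ A ⟶ A).right = x.right
    rw [Category.assoc, ← relUnder_fst]
    exact hx
  · apply Under.UnderMorphism.ext
    rw [prod.lift_snd]
    show (u ≫ r.right) ≫ (prod.snd : A ⨯ A ⟶ A).right = y.right
    rw [Category.assoc, ← relUnder_snd]
    exact hy

lemma relUnder_equiv {A R₀ : Under X} (r : R₀ ⟶ A ⨯ A) (hR : IsInternalEquivalence r) :
    IsInternalEquivalence (relUnder r) := by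
  constructor
  · exact relUnder_mono r hR.mono
  · -- refl
    intro W x
    obtain ⟨d, hd⟩ := hR.refl (𝟙 A)
    refine ⟨x ≫ d.right, ?_⟩
    rw [Category.assoc, right_comp_relUnder r d, hd]
    rw [prod.lift_fst, prod.lift_snd, Under.id_right, prod.comp_lift, Category.comp_id]
  · -- symm
    intro W x y h
    have hid : RelFactors r (r ≫ prod.fst) (r ≫ prod.snd) :=
      ⟨𝟙 R₀, by rw [Category.id_comp]; exact Limits.prod.hom_ext (prod.lift_fst _ _).symm (prod.lift_snd _ _).symm⟩
    obtain ⟨σ, hσ⟩ := hR.symm _ _ hid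
    obtain ⟨u, hu⟩ := h
    refine ⟨u ≫ σ.right, ?_⟩
    have e1 : u ≫ (r ≫ prod.snd).right = y := by
      rw [Under.comp_right, ← relUnder_snd, reassoc_of% hu, prod.lift_snd]
    have e2 : u ≫ (r ≫ prod.fst).right = x := by
      rw [Under.comp_right, ← relUnder_fst, reassoc_of% hu, prod.lift_fst]
    rw [Category.assoc, right_comp_relUnder r σ, hσ, prod.lift_fst, prod.lift_snd,
      prod.comp_lift, e1, e2]
  · -- trans
    intro W x y z h h'
    obtain ⟨u, hu⟩ := h
    obtain ⟨v, hv⟩ := h'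
    let p1 := pullback.fst (r ≫ prod.snd) (r ≫ prod.fst)
    let p2 := pullback.snd (r ≫ prod.snd) (r ≫ prod.fst)
    have hab : RelFactors r (p1 ≫ r ≫ prod.fst) (p1 ≫ r ≫ prod.snd) :=
      ⟨p1, Limits.prod.hom_ext (by rw [prod.lift_fst]; exact Category.assoc _ _ _)
        (by rw [prod.lift_snd]; exact Category.assoc _ _ _)⟩
    have hbc : RelFactors r (p1 ≫ r ≫ prod.snd) (p2 ≫ r ≫ prod.snd) :=
      ⟨p2, Limits.prod.hom_ext
        (by rw [prod.lift_fst, Category.assoc]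
            exact (pullback.condition (f := r ≫ prod.snd) (g := r ≫ prod.fst)).symm)
        (by rw [prod.lift_snd]; exact Category.assoc _ _ _)⟩
    obtain ⟨τ, hτ⟩ := hR.trans _ _ _ hab hbc
    have h1 : u ≫ (Under.forget X).map (r ≫ prod.snd) =
        v ≫ (Under.forget X).map (r ≫ prod.fst) := by
      show u ≫ (r ≫ prod.snd).right = v ≫ (r ≫ prod.fst).right
      rw [Under.comp_right, Under.comp_right, ← relUnder_snd, ← relUnder_fst,
        reassoc_of% hu, reassoc_of% hv, prod.lift_snd, prod.lift_fst]
    have : PreservesLimit (cospan (r ≫ prod.snd) (r ≫ prod.fst)) (Under.forget X) :=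
      inferInstance
    have : IsIso (pullbackComparison (Under.forget X) (r ≫ prod.snd) (r ≫ prod.fst)) := by
      rw [← PreservesPullback.iso_hom]
      infer_instance
    let φ := pullbackComparison (Under.forget X) (r ≫ prod.snd) (r ≫ prod.fst)
    let w : W ⟶ ((pullback (r ≫ prod.snd) (r ≫ prod.fst) : Under X) : Under X).right :=
      pullback.lift u v h1 ≫ (inv φ :)
    have w1 : w ≫ p1.right = u := by
      show (pullback.lift u v h1 ≫ (inv φ :)) ≫ (Under.forget X).map p1 = u
      erw [Category.assoc, ← pullbackComparison_comp_fst, IsIso.inv_hom_id_assoc,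
        pullback.lift_fst]
    have w2 : w ≫ p2.right = v := by
      show (pullback.lift u v h1 ≫ (inv φ :)) ≫ (Under.forget X).map p2 = v
      erw [Category.assoc, ← pullbackComparison_comp_snd, IsIso.inv_hom_id_assoc,
        pullback.lift_snd]
    refine ⟨w ≫ τ.right, ?_⟩
    have e1 : w ≫ (p1 ≫ r ≫ prod.fst).right = x := by
      rw [Under.comp_right, Under.comp_right, reassoc_of% w1, ← relUnder_fst,
        reassoc_of% hu, prod.lift_fst]
    have e2 : w ≫ (p2 ≫ r ≫ prod.snd).right = z := by
      rw [Under.comp_right, Under.comp_right, reassoc_of% w2, ← relUnder_snd,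
        reassoc_of% hv, prod.lift_snd]
    rw [Category.assoc, right_comp_relUnder r τ, hτ, prod.lift_fst, prod.lift_snd,
      prod.comp_lift, e1, e2]

lemma relUnder_inter {A R₀ S₀ T₀ : Under X} (r : R₀ ⟶ A ⨯ A) (s : S₀ ⟶ A ⨯ A)
    (t : T₀ ⟶ A ⨯ A)
    (hI : ∀ ⦃W : Under X⦄ (x y : W ⟶ A), RelFactors r x y → RelFactors s x y →
      RelFactors t x y)
    {W : C} (x y : W ⟶ A.right) (h1 : RelFactors (relUnder r) x y)
    (h2 : RelFactors (relUnder s) x y) : RelFactors (relUnder t) x y := by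
  obtain ⟨u, hu⟩ := h1
  obtain ⟨v, hv⟩ := h2
  let p1 := pullback.fst r s
  let p2 := pullback.snd r s
  have hRr : RelFactors r (p1 ≫ r ≫ prod.fst) (p1 ≫ r ≫ prod.snd) :=
    ⟨p1, Limits.prod.hom_ext (by rw [prod.lift_fst]; exact Category.assoc _ _ _)
      (by rw [prod.lift_snd]; exact Category.assoc _ _ _)⟩
  have hSs : RelFactors s (p1 ≫ r ≫ prod.fst) (p1 ≫ r ≫ prod.snd) := by
    refine ⟨p2, ?_⟩
    rw [← pullback.condition]
    exact Limits.prod.hom_ext (by rw [prod.lift_fst]; exact Category.assoc _ _ _)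
      (by rw [prod.lift_snd]; exact Category.assoc _ _ _)
  obtain ⟨τ, hτ⟩ := hI _ _ hRr hSs
  have hc : u ≫ (Under.forget X).map r = v ≫ (Under.forget X).map s := by
    show u ≫ r.right = v ≫ s.right
    have h2 := underComparison_mono (A := A)
    apply (cancel_mono (prod.lift (prod.fst : A ⨯ A ⟶ A).right
      (prod.snd : A ⨯ A ⟶ A).right)).mp
    rw [Category.assoc, Category.assoc]
    show u ≫ relUnder r = v ≫ relUnder s
    rw [hu, hv]
  have : PreservesLimit (cospan r s) (Under.forget X) := inferInstance
  have : IsIso (pullbackComparison (Under.forget X) r s) := by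
    rw [← PreservesPullback.iso_hom]
    infer_instance
  let φ := pullbackComparison (Under.forget X) r s
  let w : W ⟶ ((pullback r s : Under X) : Under X).right := pullback.lift u v hc ≫ (inv φ :)
  have w1 : w ≫ p1.right = u := by
    show (pullback.lift u v hc ≫ (inv φ :)) ≫ (Under.forget X).map p1 = u
    erw [Category.assoc, ← pullbackComparison_comp_fst, IsIso.inv_hom_id_assoc,
      pullback.lift_fst]
  refine ⟨w ≫ τ.right, ?_⟩
  have e1 : w ≫ (p1 ≫ r ≫ prod.fst).right = x := by
    rw [Under.comp_right, Under.comp_right, reassoc_of% w1, ← relUnder_fst,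
      reassoc_of% hu, prod.lift_fst]
  have e2 : w ≫ (p1 ≫ r ≫ prod.snd).right = y := by
    rw [Under.comp_right, Under.comp_right, reassoc_of% w1, ← relUnder_snd,
      reassoc_of% hu, prod.lift_snd]
  rw [Category.assoc, right_comp_relUnder t τ, hτ, prod.lift_fst, prod.lift_snd,
    prod.comp_lift, e1, e2]

end Aux

/-- If a finitely complete category `C` satisfies the triangular lemma, then so do the
slice category `Over X` and the coslice category `Under X`, for every object `X`. -/
theorem triangular_slice_coslice [HasFiniteLimits C]
    (hC : SatisfiesTriangularLemma C) (X : C) :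
    SatisfiesTriangularLemma (Over X) ∧ SatisfiesTriangularLemma (Under X) := by
  constructor
  · intro A R₀ S₀ T₀ r s t hR hS hT hI W x y z hxy hyz hxz
    refine relOverB t y z ?_
    refine hC (relOver r) (relOver s) (relOver t) (relOver_equiv r hR) (relOver_equiv s hS)
      (relOver_equiv t hT) ?_ x.left y.left z.left (relOverA r hxy) (relOverA s hyz)
      (relOverA t hxz)
    intro W' a b h1 h2
    have e := relOver_w r h1
    exact relOverA t (hI (Over.homMk a rfl : Over.mk (a ≫ A.hom) ⟶ A) (Over.homMk b e.symm)
      (relOverB r _ _ h1) (relOverB s _ _ h2))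
  · intro A R₀ S₀ T₀ r s t hR hS hT hI W x y z hxy hyz hxz
    refine relUnderB t hT.mono y z ?_
    exact hC (relUnder r) (relUnder s) (relUnder t) (relUnder_equiv r hR) (relUnder_equiv s hS)
      (relUnder_equiv t hT) (fun W' a b h1 h2 => relUnder_inter r s t hI a b h1 h2)
      x.right y.right z.right (relUnderA r hxy) (relUnderA s hyz) (relUnderA t hxz)
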